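/- Let k be a field, A a finite set of points of k^n, and let λ be an element of the limiting set E(D(A)). Then for every β ∈ ∪_{λ' ≤ λ} (λ' + ℕ₀^n), where λ' runs over elements of E(D(A)) with λ' ≤ λ in the lexicographic ordering, there exists a polynomial f_β ∈ k[X_1,…,X_n] such that: (i) the leading term of f_β in the lexicographic ordering (with X_1 < X_2 < … < X_n) is X^β; (ii) the exponents of all lower terms of f_β lie in ℕ₀^n − ∪_{λ' ≤ λ} (λ' + ℕ₀^n); and (iii) f_β(a) = 0 for all a ∈ A. -/

import Mathlib

/-- `D ∈ 𝒟ₙ`: a finite set `D ⊆ ℕ₀ⁿ` (given as a `Finset`) such that whenever `d ∈ D`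
and `dᵢ ≠ 0`, then `d − eᵢ ∈ D`. -/
def IsDset {n : ℕ} (D : Finset (Fin n → ℕ)) : Prop :=
  ∀ d ∈ D, ∀ i : Fin n, d i ≠ 0 → d - Pi.single i 1 ∈ D

variable {k : Type*} [Field k] [DecidableEq k]

/-- The set `D(A) ⊆ ℕ₀ⁿ` attached to a finite set of points `A ⊆ kⁿ`, defined by
induction on `n`.  For `n = 0`, `D(A)` is empty if `A` is and the single point of `ℕ₀⁰`
otherwise (so that for `n = 1` one gets `D(A) = {0, 1, …, #A − 1}`).  For `n + 1`:
writing `p(A)` for the set of first coordinates of `A` and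
`H a₁ = p⁻¹(a₁) ∩ A ⊆ kⁿ` (via the projection `Fin.tail` forgetting the first
coordinate), `D(A) = Σ_{a₁ ∈ p(A)} D(H a₁)`, the sum with respect to the addition `+`
on `𝒟`; spelled out via the closed formula for such sums, `d ∈ D(A)` iff
`Fin.tail d ∈ ⋃_{a₁ ∈ p(A)} D(H a₁)` and `d 0 < #{a₁ ∈ p(A) : Fin.tail d ∈ D(H a₁)}`. -/
def DofA : (n : ℕ) → Finset (Fin n → k) → Finset (Fin n → ℕ)
  | 0, A => A.image (fun _ => (fun _ => 0))
  | (n + 1), A =>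
      ((A.image (fun a => a 0)).biUnion
          (fun a1 => DofA n ((A.filter (fun a => a 0 = a1)).image (fun a => Fin.tail a)))).biUnion
        (fun dh =>
          (Finset.range
              (((A.image (fun a => a 0)).filter
                  (fun a1 =>
                    dh ∈ DofA n ((A.filter (fun a => a 0 = a1)).image (fun a => Fin.tail a)))).card)).image
            (fun j => Fin.cons j dh))


/-- The strict lexicographic order on exponent vectors corresponding to the
lexicographic monomial ordering with `X₁ < X₂ < … < Xₙ`: the exponents of the
variables with *larger* index are compared first. -/
def lexLt {n : ℕ} (α β : Fin n → ℕ) : Prop :=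
  ∃ i : Fin n, α i < β i ∧ ∀ j : Fin n, i < j → α j = β j

/-- The (non-strict) lexicographic order corresponding to `X₁ < X₂ < … < Xₙ`. -/
def lexLe {n : ℕ} (α β : Fin n → ℕ) : Prop :=
  lexLt α β ∨ α = β

/-- Membership in the limiting set `E(D)`: `β ∉ D` and whenever `βᵢ ≠ 0`,
then `β − eᵢ ∈ D`. -/
def inE {n : ℕ} (D : Finset (Fin n → ℕ)) (β : Fin n → ℕ) : Prop :=
  β ∉ D ∧ ∀ i : Fin n, β i ≠ 0 → β - Pi.single i 1 ∈ D

/-- The coefficient of the monomial `X^α` in the multivariate polynomial `f`,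
with the exponent given as a function `Fin n → ℕ`. -/
noncomputable def coeffv {n : ℕ} {R : Type*} [CommSemiring R]
    (f : MvPolynomial (Fin n) R) (α : Fin n → ℕ) : R :=
  MvPolynomial.coeff (Finsupp.equivFunOnFinite.symm α) f


theorem lexLt_trans {n : ℕ} {α β γ : Fin n → ℕ} (h1 : lexLt α β) (h2 : lexLt β γ) :
    lexLt α γ := by
  obtain ⟨i, hi, hia⟩ := h1
  obtain ⟨i', hi', hia'⟩ := h2
  rcases lt_trichotomy i i' with h | rfl | h
  · exact ⟨i', (hia i' h) ▸ hi', fun j hj => (hia j (h.trans hj)).trans (hia' j hj)⟩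
  · exact ⟨i, hi.trans hi', fun j hj => (hia j hj).trans (hia' j hj)⟩
  · exact ⟨i, lt_of_lt_of_le hi (le_of_eq (hia' i h)), fun j hj => (hia j hj).trans (hia' j (h.trans hj))⟩

theorem lexLt_irrefl {n : ℕ} (α : Fin n → ℕ) : ¬ lexLt α α := by
  rintro ⟨i, hi, -⟩; exact lt_irrefl _ hi

theorem lexLt_asymm {n : ℕ} {α β : Fin n → ℕ} (h : lexLt α β) : ¬ lexLt β α :=
  fun h' => lexLt_irrefl α (lexLt_trans h h')

theorem lexLt_cons_head {n : ℕ} {m j : ℕ} (γ : Fin n → ℕ) (h : m < j) :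
    lexLt (Fin.cons m γ) (Fin.cons j γ) := by
  refine ⟨0, by simpa using h, fun l hl => ?_⟩
  obtain ⟨l, rfl⟩ := Fin.eq_succ_of_ne_zero (Fin.pos_iff_ne_zero.mp hl)
  simp only [Fin.cons_succ]

theorem lexLt_cons_tail {n : ℕ} {m j : ℕ} {γ δ : Fin n → ℕ} (h : lexLt γ δ) :
    lexLt (Fin.cons m γ) (Fin.cons j δ) := by
  obtain ⟨i, hi, hia⟩ := h
  refine ⟨i.succ, by simpa using hi, fun l hl => ?_⟩
  have hl0 : l ≠ 0 := by
    rintro rfl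
    exact absurd hl (by simp [Fin.lt_iff_val_lt_val])
  obtain ⟨l, rfl⟩ := Fin.eq_succ_of_ne_zero hl0
  simpa only [Fin.cons_succ] using hia l (Fin.succ_lt_succ_iff.mp hl)

theorem lexLt_wf (n : ℕ) : WellFounded (lexLt (n := n)) := by
  induction n with
  | zero => exact ⟨fun a => ⟨a, by rintro b ⟨i, -⟩; exact i.elim0⟩⟩
  | succ n ih =>
    have h := WellFounded.prod_lex ih (Nat.lt_wfRel.wf)
    have hsub : Subrelation (lexLt (n := n+1))
        (InvImage (Prod.Lex (lexLt (n := n)) (· < ·)) (fun α => (Fin.tail α, α 0))) := by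
      rintro α β ⟨i, hi, hia⟩
      cases i using Fin.cases with
      | zero =>
        have ht : Fin.tail α = Fin.tail β :=
          funext fun l => hia l.succ l.succ_pos
        show Prod.Lex _ _ (Fin.tail α, α 0) (Fin.tail β, β 0)
        rw [show (Fin.tail α, α 0) = (Fin.tail β, α 0) by rw [ht]]
        exact Prod.Lex.right _ hi
      | succ i =>
        exact Prod.Lex.left _ _ ⟨i, hi, fun l hl => hia l.succ (Fin.succ_lt_succ_iff.mpr hl)⟩
    exact Subrelation.wf hsub (InvImage.wf _ h)

theorem mem_DofA_succ {n : ℕ} (A : Finset (Fin (n+1) → k)) (j : ℕ) (dh : Fin n → ℕ) :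
    Fin.cons j dh ∈ DofA (n+1) A ↔
      (∃ a1 ∈ A.image (fun a => a 0),
          dh ∈ DofA n ((A.filter (fun a => a 0 = a1)).image (fun a => Fin.tail a))) ∧
        j < ((A.image (fun a => a 0)).filter
              (fun a1 =>
                dh ∈ DofA n ((A.filter (fun a => a 0 = a1)).image (fun a => Fin.tail a)))).card := by
  classical
  rw [DofA]
  simp only [Finset.mem_biUnion, Finset.mem_image, Finset.mem_range]
  constructor
  · rintro ⟨dh', hdh', j', hj', hcons⟩
    obtain ⟨rfl, rfl⟩ := Fin.cons_inj.mp hcons.symm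
    exact ⟨hdh', hj'⟩
  · rintro ⟨hdh, hj⟩
    exact ⟨dh, hdh, j, hj, rfl⟩

theorem isDset_DofA {n : ℕ} (A : Finset (Fin n → k)) : IsDset (DofA n A) := by
  induction n with
  | zero => exact fun d hd i => i.elim0
  | succ n ih =>
    intro d hd i hdi
    have hd' : Fin.cons (d 0) (Fin.tail d) ∈ DofA (n+1) A := by rwa [Fin.cons_self_tail]
    rw [mem_DofA_succ] at hd'
    obtain ⟨⟨a1, ha1, hmem⟩, hcard⟩ := hd'
    cases i using Fin.cases with
    | zero =>
      have heq : d - Pi.single 0 1 = Fin.cons (d 0 - 1) (Fin.tail d) := by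
        funext l
        cases l using Fin.cases with
        | zero => simp [Pi.sub_apply]
        | succ m =>
          simp [Pi.sub_apply, Pi.single_eq_of_ne (Fin.succ_ne_zero m), Fin.tail]
      rw [heq, mem_DofA_succ]
      exact ⟨⟨a1, ha1, hmem⟩, lt_of_le_of_lt (Nat.sub_le _ _) hcard⟩
    | succ i =>
      have hti : Fin.tail d i ≠ 0 := hdi
      have heq : d - Pi.single i.succ 1 = Fin.cons (d 0) (Fin.tail d - Pi.single i 1) := by
        funext l
        cases l using Fin.cases with
        | zero => simp [Pi.sub_apply, Pi.single_eq_of_ne (Ne.symm (Fin.succ_ne_zero i))]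
        | succ m =>
          by_cases hmi : m = i
          · subst hmi; simp [Pi.sub_apply, Fin.tail]
          · simp [Pi.sub_apply, Fin.tail,
              Pi.single_eq_of_ne (fun h => hmi (Fin.succ_injective _ h)),
              Pi.single_eq_of_ne hmi]
      rw [heq, mem_DofA_succ]
      have hsub : ∀ b1 ∈ (A.image (fun a => a 0)),
          Fin.tail d ∈ DofA n ((A.filter (fun a => a 0 = b1)).image (fun a => Fin.tail a)) →
          Fin.tail d - Pi.single i 1 ∈
            DofA n ((A.filter (fun a => a 0 = b1)).image (fun a => Fin.tail a)) := by
        intro b1 _ hb1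
        exact ih _ _ hb1 i hti
      refine ⟨⟨a1, ha1, hsub a1 ha1 hmem⟩, lt_of_lt_of_le hcard (Finset.card_le_card ?_)⟩
      intro b1 hb1
      rw [Finset.mem_filter] at hb1 ⊢
      exact ⟨hb1.1, hsub b1 hb1.1 hb1.2⟩

theorem notMem_of_isDset {n : ℕ} {D : Finset (Fin n → ℕ)} (hD : IsDset D)
    {lam β : Fin n → ℕ} (hlam : lam ∉ D) (hle : lam ≤ β) : β ∉ D := by
  intro hβ
  apply hlam
  clear hlam
  have key : ∀ N : ℕ, ∀ β : Fin n → ℕ, lam ≤ β → β ∈ D →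
      (Finset.univ.sum fun i => β i - lam i) ≤ N → lam ∈ D := by
    intro N
    induction N with
    | zero =>
      intro β hle hβ hN
      have hβl : β = lam := by
        funext i
        have h0 : β i - lam i = 0 :=
          Finset.sum_eq_zero_iff.mp (Nat.le_zero.mp hN) i (Finset.mem_univ i)
        have hli : lam i ≤ β i := hle i
        omega
      rwa [← hβl]
    | succ N ihN =>
      intro β hle hβ hN
      by_cases hbl : β = lam
      · rwa [← hbl]
      · have hex : ∃ i, lam i < β i := by
          by_contra hno
          push_neg at hno
          exact hbl (le_antisymm (fun i => hno i) hle)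
        obtain ⟨i, hi⟩ := hex
        have hβi : β i ≠ 0 := by omega
        have hmem := hD β hβ i hβi
        set β' : Fin n → ℕ := β - Pi.single i 1 with hb'
        have happ : ∀ j, β' j = β j - (Pi.single i 1 : Fin n → ℕ) j := fun j => by rw [hb']; rfl
        refine ihN β' ?_ hmem ?_
        · intro j
          rw [happ j]
          have hlj : lam j ≤ β j := hle j
          by_cases hji : j = i
          · subst hji; rw [Pi.single_eq_same]
            exact Nat.le_sub_one_of_lt hi
          · rw [Pi.single_eq_of_ne hji]
            exact le_trans hlj (Nat.le_of_eq (Nat.sub_zero _).symm)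
        · have hsum : (Finset.univ.sum fun j => β' j - lam j)
              = (Finset.univ.sum fun j => β j - lam j) - 1 := by
            rw [← Finset.sum_erase_add _ _ (Finset.mem_univ i),
                ← Finset.sum_erase_add _ (fun j => β j - lam j) (Finset.mem_univ i)]
            have h1 : β' i - lam i = (β i - lam i) - 1 := by
              rw [happ i, Pi.single_eq_same]; omega
            have h2 : ∀ j ∈ Finset.univ.erase i, β' j - lam j = β j - lam j := by
              intro j hj
              rw [happ j, Pi.single_eq_of_ne (Finset.mem_erase.mp hj).1, Nat.sub_zero]
            rw [Finset.sum_congr rfl h2, h1]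
            have hge : 1 ≤ β i - lam i := by omega
            omega
          omega
  exact key _ β hle hβ le_rfl

theorem equivFun_symm_cons {n : ℕ} (i : ℕ) (γ : Fin n → ℕ) :
    Finsupp.equivFunOnFinite.symm (Fin.cons i γ) =
      Finsupp.cons i (Finsupp.equivFunOnFinite.symm γ) := by
  ext l
  cases l using Fin.cases with
  | zero => simp [Finsupp.cons_zero]
  | succ m => simp [Finsupp.cons_succ]

theorem coeffv_symm_finSuccEquiv {n : ℕ} (F : Polynomial (MvPolynomial (Fin n) k))
    (m : ℕ) (γ : Fin n → ℕ) :
    coeffv ((MvPolynomial.finSuccEquiv k n).symm F) (Fin.cons m γ)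
      = MvPolynomial.coeff (Finsupp.equivFunOnFinite.symm γ) (F.coeff m) := by
  rw [coeffv, equivFun_symm_cons, ← MvPolynomial.finSuccEquiv_coeff_coeff,
    AlgEquiv.apply_symm_apply]


theorem lemmaM : ∀ (n : ℕ) (A : Finset (Fin n → k)) (β : Fin n → ℕ), β ∉ DofA n A →
    ∃ f : MvPolynomial (Fin n) k,
      coeffv f β = 1 ∧ (∀ γ, coeffv f γ ≠ 0 → γ ≠ β → lexLt γ β) ∧
      ∀ a ∈ A, MvPolynomial.eval a f = 0 := by
  intro n
  induction n with
  | zero =>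
    intro A β hβ
    have hAempty : A = ∅ := by
      by_contra hA
      obtain ⟨a, ha⟩ := Finset.nonempty_of_ne_empty hA
      apply hβ
      rw [DofA, Finset.mem_image]
      exact ⟨a, ha, funext fun i => i.elim0⟩
    refine ⟨1, ?_, ?_, ?_⟩
    · rw [coeffv, MvPolynomial.coeff_one, if_pos (Subsingleton.elim _ _)]
    · intro γ hne hneq
      exact absurd (funext fun i => i.elim0 : γ = β) hneq
    · intro a ha
      rw [hAempty] at ha
      exact absurd ha (Finset.notMem_empty a)
  | succ n ih =>
    intro A β hβ
    classical
    set j := β 0 with hj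
    set dh := Fin.tail β with hdh
    have hβcons : β = Fin.cons j dh := (Fin.cons_self_tail β).symm
    set H : k → Finset (Fin n → k) :=
      fun a1 => (A.filter (fun a => a 0 = a1)).image (fun a => Fin.tail a) with hH
    set pA := A.image (fun a => a 0) with hpA
    set T := pA.filter (fun a1 => dh ∈ DofA n (H a1)) with hT
    set S := pA.filter (fun a1 => dh ∉ DofA n (H a1)) with hS
    have hjc : T.card ≤ j := by
      by_contra hcon
      push_neg at hcon
      apply hβ
      rw [hβcons, mem_DofA_succ]
      have hTne : T.Nonempty := Finset.card_pos.mp (lt_of_le_of_lt (Nat.zero_le j) hcon)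
      obtain ⟨a1, ha1⟩ := hTne
      rw [hT, Finset.mem_filter] at ha1
      exact ⟨⟨a1, ha1.1, ha1.2⟩, hcon⟩
    have hgs : ∀ s ∈ S, ∃ g : MvPolynomial (Fin n) k,
        coeffv g dh = 1 ∧ (∀ γ, coeffv g γ ≠ 0 → γ ≠ dh → lexLt γ dh) ∧
        ∀ b ∈ H s, MvPolynomial.eval b g = 0 :=
      fun s hs => ih (H s) dh (Finset.mem_filter.mp hs).2
    choose! g hg1 hg2 hg3 using hgs
    set Mh : MvPolynomial (Fin n) k :=
      MvPolynomial.monomial (Finsupp.equivFunOnFinite.symm dh) 1 with hMh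
    set u0 : Polynomial k :=
      Polynomial.X ^ (j - T.card) * T.prod (fun t => Polynomial.X - Polynomial.C t) with hu0
    set G : Polynomial (MvPolynomial (Fin n) k) :=
      Polynomial.C Mh + S.sum (fun s =>
        (Lagrange.basis S id s).map (MvPolynomial.C) * Polynomial.C (g s - Mh)) with hG
    set F : Polynomial (MvPolynomial (Fin n) k) :=
      u0.map MvPolynomial.C * G with hF
    -- u0 is monic of degree j
    have hmonic : u0.Monic := by
      apply (Polynomial.monic_X_pow _).mul
      exact Polynomial.monic_prod_of_monic _ _ (fun t _ => Polynomial.monic_X_sub_C t)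
    have hdeg : u0.natDegree = j := by
      rw [hu0, (Polynomial.monic_X_pow _).natDegree_mul
          (Polynomial.monic_prod_of_monic _ _ (fun t _ => Polynomial.monic_X_sub_C t)),
        Polynomial.natDegree_X_pow,
        Polynomial.natDegree_prod_of_monic _ _ (fun t _ => Polynomial.monic_X_sub_C t)]
      simp only [Polynomial.natDegree_X_sub_C, Finset.sum_const, smul_eq_mul, mul_one]
      omega
    -- coefficient of G at dh
    have hGdh : ∀ b : ℕ, MvPolynomial.coeff (Finsupp.equivFunOnFinite.symm dh) (G.coeff b)
        = if b = 0 then 1 else 0 := by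
      intro b
      rw [hG, Polynomial.coeff_add, Polynomial.finset_sum_coeff]
      have h1 : ∀ s ∈ S, MvPolynomial.coeff (Finsupp.equivFunOnFinite.symm dh)
          (((Lagrange.basis S id s).map MvPolynomial.C * Polynomial.C (g s - Mh)).coeff b) = 0 := by
        intro s hs
        rw [Polynomial.coeff_mul_C, Polynomial.coeff_map, MvPolynomial.coeff_C_mul,
          MvPolynomial.coeff_sub]
        have : MvPolynomial.coeff (Finsupp.equivFunOnFinite.symm dh) (g s) = 1 := hg1 s hs
        rw [this, hMh, MvPolynomial.coeff_monomial, if_pos rfl]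
        ring
      rw [MvPolynomial.coeff_add, MvPolynomial.coeff_sum, Finset.sum_congr rfl h1,
        Finset.sum_const_zero, add_zero, Polynomial.coeff_C]
      split
      · rw [hMh, MvPolynomial.coeff_monomial, if_pos rfl]
      · rw [MvPolynomial.coeff_zero]
    -- coefficient of G at other γ
    have hGother : ∀ (b : ℕ) (γ : Fin n → ℕ), γ ≠ dh →
        (∀ s ∈ S, coeffv (g s) γ = 0) →
        MvPolynomial.coeff (Finsupp.equivFunOnFinite.symm γ) (G.coeff b) = 0 := by
      intro b γ hγ hzero
      rw [hG, Polynomial.coeff_add, Polynomial.finset_sum_coeff, MvPolynomial.coeff_add,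
        MvPolynomial.coeff_sum]
      have hsymm : (Finsupp.equivFunOnFinite.symm γ) ≠ (Finsupp.equivFunOnFinite.symm dh) :=
        fun h => hγ (Finsupp.equivFunOnFinite.symm.injective h)
      have h1 : ∀ s ∈ S, MvPolynomial.coeff (Finsupp.equivFunOnFinite.symm γ)
          (((Lagrange.basis S id s).map MvPolynomial.C * Polynomial.C (g s - Mh)).coeff b) = 0 := by
        intro s hs
        rw [Polynomial.coeff_mul_C, Polynomial.coeff_map, MvPolynomial.coeff_C_mul,
          MvPolynomial.coeff_sub]
        have h2 : MvPolynomial.coeff (Finsupp.equivFunOnFinite.symm γ) (g s) = 0 := hzero s hs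
        rw [h2, hMh, MvPolynomial.coeff_monomial, if_neg (fun h => hsymm h.symm)]
        ring
      rw [Finset.sum_congr rfl h1, Finset.sum_const_zero, add_zero, Polynomial.coeff_C]
      split
      · rw [hMh, MvPolynomial.coeff_monomial, if_neg (fun h => hsymm h.symm)]
      · rw [MvPolynomial.coeff_zero]
    -- coefficient of F at dh
    have hFdh : ∀ m : ℕ,
        MvPolynomial.coeff (Finsupp.equivFunOnFinite.symm dh) (F.coeff m) = u0.coeff m := by
      intro m
      rw [hF, Polynomial.coeff_mul, MvPolynomial.coeff_sum]
      have hterm : ∀ x ∈ Finset.HasAntidiagonal.antidiagonal m,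
          MvPolynomial.coeff (Finsupp.equivFunOnFinite.symm dh)
            ((Polynomial.map MvPolynomial.C u0).coeff x.1 * G.coeff x.2)
          = u0.coeff x.1 * (if x.2 = 0 then 1 else 0) := by
        intro x _
        rw [Polynomial.coeff_map, MvPolynomial.coeff_C_mul, hGdh]
      rw [Finset.sum_congr rfl hterm, Finset.sum_eq_single (m, 0)]
      · simp
      · rintro ⟨a, b⟩ hab hne
        have hb : b ≠ 0 := by
          rintro rfl
          rw [Finset.HasAntidiagonal.mem_antidiagonal] at hab
          exact hne (by simp [← hab])
        simp [hb]
      · intro h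
        exact absurd (Finset.HasAntidiagonal.mem_antidiagonal.mpr (by simp)) h
    -- coefficient of F at other exponents
    have hFother : ∀ (m : ℕ) (γ : Fin n → ℕ), γ ≠ dh → (∀ s ∈ S, coeffv (g s) γ = 0) →
        MvPolynomial.coeff (Finsupp.equivFunOnFinite.symm γ) (F.coeff m) = 0 := by
      intro m γ hγ hz
      rw [hF, Polynomial.coeff_mul, MvPolynomial.coeff_sum]
      apply Finset.sum_eq_zero
      intro x _
      rw [Polynomial.coeff_map, MvPolynomial.coeff_C_mul, hGother x.2 γ hγ hz, mul_zero]
    refine ⟨(MvPolynomial.finSuccEquiv k n).symm F, ?_, ?_, ?_⟩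
    · rw [hβcons, coeffv_symm_finSuccEquiv, hFdh, ← hdeg]
      exact hmonic.coeff_natDegree
    · intro γ' hne hneq
      rw [← Fin.cons_self_tail γ', coeffv_symm_finSuccEquiv] at hne
      have hgoal : lexLt (Fin.cons (γ' 0) (Fin.tail γ')) β → lexLt γ' β := by
        rw [Fin.cons_self_tail]; exact id
      apply hgoal
      by_cases hcase : Fin.tail γ' = dh
      · rw [hcase, hFdh] at hne
        have hmle : γ' 0 ≤ j := by
          have h := Polynomial.le_natDegree_of_ne_zero hne
          rwa [hdeg] at h
        have hmne : γ' 0 ≠ j := by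
          intro h
          apply hneq
          rw [← Fin.cons_self_tail γ', hcase, h, ← hβcons]
        rw [hβcons, hcase]
        exact lexLt_cons_head dh (lt_of_le_of_ne hmle hmne)
      · have hex : ∃ s ∈ S, coeffv (g s) (Fin.tail γ') ≠ 0 := by
          by_contra hno
          push_neg at hno
          exact hne (hFother _ _ hcase (fun s hs => hno s hs))
        obtain ⟨s, hs, hcs⟩ := hex
        rw [hβcons]
        exact lexLt_cons_tail (hg2 s hs _ hcs hcase)
    · intro a ha
      have ha0 : a 0 ∈ pA := Finset.mem_image_of_mem _ ha
      rw [← Fin.cons_self_tail a, MvPolynomial.eval_eq_eval_mv_eval', AlgEquiv.apply_symm_apply]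
      rw [hF, Polynomial.map_mul, Polynomial.map_map]
      have hφC : (MvPolynomial.eval (Fin.tail a)).comp (MvPolynomial.C) = RingHom.id k :=
        RingHom.ext fun x => MvPolynomial.eval_C x
      rw [hφC, Polynomial.map_id, Polynomial.eval_mul]
      by_cases hc : dh ∈ DofA n (H (a 0))
      · have haT : a 0 ∈ T := Finset.mem_filter.mpr ⟨ha0, hc⟩
        have hu0z : Polynomial.eval (a 0) u0 = 0 := by
          rw [hu0, Polynomial.eval_mul, Polynomial.eval_prod]
          have : (Polynomial.X - Polynomial.C (a 0)).eval (a 0) = 0 := by simp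
          rw [Finset.prod_eq_zero haT this, mul_zero]
        rw [hu0z, zero_mul]
      · have haS : a 0 ∈ S := Finset.mem_filter.mpr ⟨ha0, hc⟩
        have hGeval : Polynomial.eval (a 0)
            (Polynomial.map (MvPolynomial.eval (Fin.tail a)) G) = 0 := by
          rw [Polynomial.eval_map, hG, Polynomial.eval₂_add, Polynomial.eval₂_C,
            Polynomial.eval₂_finset_sum]
          have hterm : ∀ s ∈ S,
              Polynomial.eval₂ (MvPolynomial.eval (Fin.tail a)) (a 0)
                (Polynomial.map MvPolynomial.C (Lagrange.basis S id s) *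
                  Polynomial.C (g s - Mh))
              = (Polynomial.eval (a 0) (Lagrange.basis S id s)) *
                  (MvPolynomial.eval (Fin.tail a) (g s) -
                    MvPolynomial.eval (Fin.tail a) Mh) := by
            intro s _
            rw [Polynomial.eval₂_mul, Polynomial.eval₂_C, map_sub]
            congr 1
            rw [← Polynomial.eval_map, Polynomial.map_map, hφC, Polynomial.map_id]
          rw [Finset.sum_congr rfl hterm, Finset.sum_eq_single (a 0)]
          · have h1 : Polynomial.eval (a 0) (Lagrange.basis S id (a 0)) = 1 :=
              Lagrange.eval_basis_self (Set.injOn_id _) haS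
            have htail : Fin.tail a ∈ H (a 0) := by
              rw [hH]
              exact Finset.mem_image.mpr ⟨a, Finset.mem_filter.mpr ⟨ha, rfl⟩, rfl⟩
            rw [h1, hg3 (a 0) haS (Fin.tail a) htail]
            ring
          · intro s hsS hne
            have h0 : Polynomial.eval (a 0) (Lagrange.basis S id s) = 0 := by
              have h := Lagrange.eval_basis_of_ne (v := id) hne haS
              simpa using h
            rw [h0, zero_mul]
          · intro h
            exact absurd haS h
        rw [hGeval, mul_zero]


theorem coeffv_coe {n : ℕ} (f : MvPolynomial (Fin n) k) (γf : Fin n →₀ ℕ) :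
    coeffv f ⇑γf = MvPolynomial.coeff γf f := by
  rw [coeffv]
  congr 1
  exact Finsupp.equivFunOnFinite.symm_apply_apply γf

theorem coe_symm_equivFun {n : ℕ} (δ : Fin n → ℕ) :
    ⇑(Finsupp.equivFunOnFinite.symm δ) = δ :=
  Finsupp.equivFunOnFinite.apply_symm_apply δ

/-- Theorem 1 of the paper: let `A ⊆ kⁿ` be finite and `λ ∈ E(D(A))`.  Then for every
`β ∈ ⋃_{λ' ≤ λ} (λ' + ℕ₀ⁿ)`, where `λ'` runs over the elements of `E(D(A))` with
`λ' ≤ λ` lexicographically, there is a polynomial `f_β ∈ k[X₁,…,Xₙ]` such that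
(i) the lexicographic leading term of `f_β` is `X^β` (coefficient `1`, all other
terms lexicographically lower), (ii) the exponents of all lower terms of `f_β` lie in
`ℕ₀ⁿ − ⋃_{λ' ≤ λ} (λ' + ℕ₀ⁿ)`, and (iii) `f_β(a) = 0` for all `a ∈ A`. -/
theorem stmt_13 (n : ℕ) (A : Finset (Fin n → k)) (lam : Fin n → ℕ)
    (hlam : inE (DofA n A) lam) (β : Fin n → ℕ)
    (hβ : ∃ lam' : Fin n → ℕ, inE (DofA n A) lam' ∧ lexLe lam' lam ∧ lam' ≤ β) :
    ∃ f : MvPolynomial (Fin n) k,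
      (coeffv f β = 1 ∧ ∀ γ : Fin n → ℕ, coeffv f γ ≠ 0 → γ ≠ β → lexLt γ β) ∧
      (∀ γ : Fin n → ℕ, coeffv f γ ≠ 0 → γ ≠ β →
        ¬ ∃ lam' : Fin n → ℕ, inE (DofA n A) lam' ∧ lexLe lam' lam ∧ lam' ≤ γ) ∧
      (∀ a ∈ A, MvPolynomial.eval a f = 0) := by
  classical
  refine (lexLt_wf n).induction
    (C := fun β => (∃ lam' : Fin n → ℕ, inE (DofA n A) lam' ∧ lexLe lam' lam ∧ lam' ≤ β) →
      ∃ f : MvPolynomial (Fin n) k,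
        (coeffv f β = 1 ∧ ∀ γ : Fin n → ℕ, coeffv f γ ≠ 0 → γ ≠ β → lexLt γ β) ∧
        (∀ γ : Fin n → ℕ, coeffv f γ ≠ 0 → γ ≠ β →
          ¬ ∃ lam' : Fin n → ℕ, inE (DofA n A) lam' ∧ lexLe lam' lam ∧ lam' ≤ γ) ∧
        (∀ a ∈ A, MvPolynomial.eval a f = 0)) β ?_ hβ
  clear hβ β
  intro β IH hb
  obtain ⟨lam', hlamE, hlamle, hlam'β⟩ := hb
  have hβnot : β ∉ DofA n A := notMem_of_isDset (isDset_DofA A) hlamE.1 hlam'β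
  obtain ⟨f0, hf01, hf02, hf03⟩ := lemmaM n A β hβnot
  set Bad : Finset (Fin n →₀ ℕ) := f0.support.filter
    (fun γf => (⇑γf : Fin n → ℕ) ≠ β ∧
      ∃ lam'' : Fin n → ℕ, inE (DofA n A) lam'' ∧ lexLe lam'' lam ∧ lam'' ≤ ⇑γf) with hBad
  have hBadlt : ∀ γf ∈ Bad, lexLt ⇑γf β := by
    intro γf hγf
    rw [hBad, Finset.mem_filter] at hγf
    refine hf02 _ ?_ hγf.2.1
    rw [coeffv_coe]
    exact MvPolynomial.mem_support_iff.mp hγf.1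
  have hch : ∀ γf ∈ Bad,
      ∃ fγ : MvPolynomial (Fin n) k,
        (coeffv fγ ⇑γf = 1 ∧ ∀ δ, coeffv fγ δ ≠ 0 → δ ≠ ⇑γf → lexLt δ ⇑γf) ∧
        (∀ δ, coeffv fγ δ ≠ 0 → δ ≠ ⇑γf →
          ¬ ∃ lam'' : Fin n → ℕ, inE (DofA n A) lam'' ∧ lexLe lam'' lam ∧ lam'' ≤ δ) ∧
        (∀ a ∈ A, MvPolynomial.eval a fγ = 0) := by
    intro γf hγf
    have h2 := (Finset.mem_filter.mp hγf).2.2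
    exact IH ⇑γf (hBadlt γf hγf) h2
  choose! fg hfg using hch
  set f : MvPolynomial (Fin n) k :=
    f0 - Bad.sum (fun γf => MvPolynomial.C (MvPolynomial.coeff γf f0) * fg γf) with hf
  have hcoefff : ∀ δ : Fin n → ℕ, coeffv f δ =
      coeffv f0 δ - Bad.sum (fun γf => MvPolynomial.coeff γf f0 * coeffv (fg γf) δ) := by
    intro δ
    rw [hf, coeffv, coeffv, MvPolynomial.coeff_sub, MvPolynomial.coeff_sum]
    congr 1
    refine Finset.sum_congr rfl (fun γf _ => ?_)
    rw [MvPolynomial.coeff_C_mul, coeffv]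
  have hfgβ : ∀ γf ∈ Bad, coeffv (fg γf) β = 0 := by
    intro γf hγf
    by_contra hne
    have hβne : β ≠ ⇑γf := fun h => (Finset.mem_filter.mp hγf).2.1 h.symm
    exact lexLt_asymm (hBadlt γf hγf) ((hfg γf hγf).1.2 β hne hβne)
  refine ⟨f, ⟨?_, ?_⟩, ?_, ?_⟩
  · rw [hcoefff, Finset.sum_congr rfl (fun γf hγf => by rw [hfgβ γf hγf, mul_zero]),
      Finset.sum_const_zero, sub_zero, hf01]
  · intro δ hδ hδβ
    rw [hcoefff] at hδ
    by_cases h0 : coeffv f0 δ ≠ 0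
    · exact hf02 δ h0 hδβ
    · push_neg at h0
      have hex : ∃ γf ∈ Bad, coeffv (fg γf) δ ≠ 0 := by
        by_contra hno
        push_neg at hno
        apply hδ
        rw [h0, Finset.sum_congr rfl (fun γf hγf => by rw [hno γf hγf, mul_zero]),
          Finset.sum_const_zero, sub_zero]
      obtain ⟨γf, hγf, hcne⟩ := hex
      by_cases hδγ : δ = ⇑γf
      · rw [hδγ]; exact hBadlt γf hγf
      · exact lexLt_trans ((hfg γf hγf).1.2 δ hcne hδγ) (hBadlt γf hγf)
  · rintro δ hδ hδβ ⟨lam'', hE'', hle'', hle2''⟩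
    apply hδ
    rw [hcoefff]
    set δf : Fin n →₀ ℕ := Finsupp.equivFunOnFinite.symm δ with hδf
    have hδfc : ⇑δf = δ := coe_symm_equivFun δ
    have hterm : ∀ γf ∈ Bad, γf ≠ δf → MvPolynomial.coeff γf f0 * coeffv (fg γf) δ = 0 := by
      intro γf hγf hneγ
      have hδne : δ ≠ ⇑γf := by
        intro h
        apply hneγ
        rw [hδf, h]
        exact (Finsupp.equivFunOnFinite.symm_apply_apply γf).symm
      have : coeffv (fg γf) δ = 0 := by
        by_contra hc
        exact (hfg γf hγf).2.1 δ hc hδne ⟨lam'', hE'', hle'', hle2''⟩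
      rw [this, mul_zero]
    by_cases hmem : δf ∈ Bad
    · rw [Finset.sum_eq_single_of_mem δf hmem (fun γf hγf hne => hterm γf hγf hne)]
      have h1 : coeffv (fg δf) δ = 1 := by
        rw [← hδfc]; exact (hfg δf hmem).1.1
      rw [h1, mul_one, coeffv]
      exact sub_self _
    · have hsupp : δf ∉ f0.support := by
        intro hsup
        apply hmem
        rw [hBad, Finset.mem_filter]
        exact ⟨hsup, by rw [hδfc]; exact hδβ, by rw [hδfc]; exact ⟨lam'', hE'', hle'', hle2''⟩⟩
      have h0 : coeffv f0 δ = 0 := by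
        rw [coeffv, ← hδf]
        exact MvPolynomial.notMem_support_iff.mp hsupp
      rw [h0, Finset.sum_congr rfl (fun γf hγf => hterm γf hγf (fun h => hmem (h ▸ hγf))),
        Finset.sum_const_zero, sub_zero]
  · intro a ha
    rw [hf, map_sub, map_sum, hf03 a ha]
    rw [Finset.sum_congr rfl (fun γf hγf => by
      rw [map_mul, MvPolynomial.eval_C, (hfg γf hγf).2.2 a ha, mul_zero]),
      Finset.sum_const_zero, sub_zero]
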